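/- Dually, let L be a diamond lattice of rank d+2 and let G be an element of corank r (rank d+2−r). Then for all k with r ≤ k+1 ≤ d+1, the lower interval [0̂, G] contains at least C(d−r+2, k+1−r) elements of corank k+1. -/

import Mathlib

section XueAux

variable {L : Type*} [Lattice L] [BoundedOrder L] [Fintype L] (rk : L → ℕ)

lemma aux_exists_le_covby (a b : L) (h : a < b) : ∃ c, a ≤ c ∧ c ⋖ b := by
  obtain ⟨c, ⟨hac, hcb⟩, hmax⟩ := Set.Finite.exists_maximalFor id {c | a ≤ c ∧ c < b}
    (Set.toFinite _) ⟨a, le_refl a, h⟩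
  exact ⟨c, hac, hcb, fun d hcd hdb => hcd.not_ge (hmax ⟨hac.trans hcd.le, hdb⟩ hcd.le)⟩

variable (hcov : ∀ a b : L, a ⋖ b → rk b = rk a + 1)

include hcov in
lemma aux_rk_lt : ∀ b a : L, a < b → rk a < rk b := by
  intro b
  induction b using WellFoundedLT.induction with
  | _ b ih =>
    intro a hab
    obtain ⟨c, hac, hcb⟩ := aux_exists_le_covby a b hab
    have hb := hcov c b hcb
    rcases eq_or_lt_of_le hac with rfl | hlt
    · omega
    · have h1 := ih c hcb.lt a hlt
      omega

include hcov in
lemma aux_covby (a b : L) (hab : a < b) (h : rk b = rk a + 1) : a ⋖ b := by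
  refine ⟨hab, fun d had hdb => ?_⟩
  have h1 := aux_rk_lt rk hcov d a had
  have h2 := aux_rk_lt rk hcov b d hdb
  omega

include hcov in
lemma aux_eq_of_le_rk (a b : L) (hab : a ≤ b) (h : rk b ≤ rk a) : a = b := by
  rcases eq_or_lt_of_le hab with rfl | hlt
  · rfl
  · exact absurd (aux_rk_lt rk hcov b a hlt) (by omega)

variable (hdiamond : ∀ a b : L, a ≤ b → rk b = rk a + 2 → (Set.Icc a b).ncard = 4)

include hcov hdiamond in
lemma aux_diamond (y c x : L) (hyc : y ⋖ c) (hcx : c ⋖ x) :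
    ∃ w, y ⋖ w ∧ w ⋖ x ∧ w ≠ c ∧ c ⊓ w = y := by
  have hrc := hcov y c hyc
  have hrx := hcov c x hcx
  have h4 := hdiamond y x (hyc.le.trans hcx.le) (by omega)
  have hsub : ¬ (Set.Icc y x ⊆ {y, x, c}) := by
    intro hs
    have h1 := Set.ncard_le_ncard hs (Set.toFinite _)
    have h2 : ({y, x, c} : Set L).ncard ≤ 3 := by
      refine le_trans (Set.ncard_insert_le _ _) ?_
      have h3 := Set.ncard_insert_le x ({c} : Set L)
      simp only [Set.ncard_singleton] at h3 ⊢
      omega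
    omega
  obtain ⟨w, hwmem, hwnot⟩ := Set.not_subset.mp hsub
  simp only [Set.mem_insert_iff, Set.mem_singleton_iff, not_or] at hwnot
  obtain ⟨hwy, hwx, hwc⟩ := hwnot
  have hylt : y < w := lt_of_le_of_ne hwmem.1 (Ne.symm hwy)
  have hltx : w < x := lt_of_le_of_ne hwmem.2 hwx
  have hr1 := aux_rk_lt rk hcov w y hylt
  have hr2 := aux_rk_lt rk hcov x w hltx
  have hrw : rk w = rk y + 1 := by omega
  refine ⟨w, aux_covby rk hcov y w hylt hrw, aux_covby rk hcov w x hltx (by omega), hwc, ?_⟩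
  -- c ⊓ w = y
  have hylecw : y ≤ c ⊓ w := le_inf hyc.le hylt.le
  by_contra hne
  have hlt1 : y < c ⊓ w := lt_of_le_of_ne hylecw (fun h => hne h.symm)
  have hle2 : c ⊓ w ≤ c := inf_le_left
  rcases eq_or_lt_of_le hle2 with heq | hlt2
  · -- c ≤ w
    have hcw : c ≤ w := heq ▸ inf_le_right
    have : c = w := aux_eq_of_le_rk rk hcov c w hcw (by omega)
    exact hwc this.symm
  · exact hyc.2 hlt1 hlt2

include hcov hdiamond in
lemma aux_lemA : ∀ n : ℕ, ∀ z x : L, z ≤ x → rk x = rk z + n →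
    n ≤ {y | z ≤ y ∧ y ⋖ x}.ncard := by
  intro n
  induction n with
  | zero => intro z x _ _; exact Nat.zero_le _
  | succ n ih =>
    intro z x hzx hr
    have hzltx : z < x := lt_of_le_of_ne hzx (by rintro rfl; omega)
    obtain ⟨c, hzc, hcx⟩ := aux_exists_le_covby z x hzltx
    have hrcx := hcov c x hcx
    have hrc : rk c = rk z + n := by omega
    have hcmem : c ∈ {y | z ≤ y ∧ y ⋖ x} := ⟨hzc, hcx⟩
    have hIH := ih z c hzc hrc
    -- build injection from {y | z ≤ y ∧ y ⋖ c} into {y | z ≤ y ∧ y ⋖ x} \ {c}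
    classical
    have hspec : ∀ y ∈ {y | z ≤ y ∧ y ⋖ c}, ∃ w, y ⋖ w ∧ w ⋖ x ∧ w ≠ c ∧ c ⊓ w = y := by
      intro y hy
      exact aux_diamond rk hcov hdiamond y c x hy.2 hcx
    set f : L → L := fun y => if h : y ∈ {y | z ≤ y ∧ y ⋖ c} then (hspec y h).choose else y with hf
    have hfspec : ∀ y (h : y ∈ {y | z ≤ y ∧ y ⋖ c}),
        y ⋖ f y ∧ f y ⋖ x ∧ f y ≠ c ∧ c ⊓ f y = y := by
      intro y h
      simp only [hf, dif_pos h]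
      exact (hspec y h).choose_spec
    have hmaps : ∀ y ∈ {y | z ≤ y ∧ y ⋖ c}, f y ∈ {y | z ≤ y ∧ y ⋖ x} \ {c} := by
      intro y h
      obtain ⟨h1, h2, h3, _⟩ := hfspec y h
      exact ⟨⟨h.1.trans h1.le, h2⟩, h3⟩
    have hinj : Set.InjOn f {y | z ≤ y ∧ y ⋖ c} := by
      intro y1 h1 y2 h2 heq
      have e1 := (hfspec y1 h1).2.2.2
      have e2 := (hfspec y2 h2).2.2.2
      rw [← e1, heq, e2]
    have hcard := Set.ncard_le_ncard_of_injOn f hmaps hinj (Set.toFinite _)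
    have hdiff : ({y | z ≤ y ∧ y ⋖ x} \ {c}).ncard + 1 = {y | z ≤ y ∧ y ⋖ x}.ncard :=
      Set.ncard_diff_singleton_add_one hcmem (Set.toFinite _)
    omega

include hcov hdiamond in
lemma aux_lemB (z c G : L) (hzc : z ≤ c) (hcG : c ⋖ G) :
    ∃ x, z ⋖ x ∧ x ≤ G ∧ ¬ x ≤ c := by
  classical
  have hGmem : G ∈ {x | z ≤ x ∧ x ≤ G ∧ ¬ x ≤ c} :=
    ⟨hzc.trans hcG.le, le_refl G, fun h => hcG.lt.not_ge h⟩
  obtain ⟨x, hx, hmin⟩ := Set.Finite.exists_minimalFor id {x | z ≤ x ∧ x ≤ G ∧ ¬ x ≤ c}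
    (Set.toFinite _) ⟨G, hGmem⟩
  have hzx : z < x := lt_of_le_of_ne hx.1 (by rintro rfl; exact hx.2.2 hzc)
  have hrk := aux_rk_lt rk hcov x z hzx
  by_cases h1 : rk x = rk z + 1
  · exact ⟨x, aux_covby rk hcov z x hzx h1, hx.2.1, hx.2.2⟩
  · exfalso
    have h2 : rk z + 2 ≤ rk x := by omega
    have hcount := aux_lemA rk hcov hdiamond (rk x - rk z) z x hzx.le (by omega)
    have h2' : 1 < ({y | z ≤ y ∧ y ⋖ x}).ncard := by omega
    obtain ⟨y1, y2, hy1, hy2, hne⟩ := (Set.one_lt_ncard_iff (Set.toFinite _)).mp h2'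
    -- each yi is below c by minimality
    have hbelow : ∀ y ∈ {y | z ≤ y ∧ y ⋖ x}, y ≤ c := by
      intro y hy
      by_contra hyc
      have hymem : y ∈ {x | z ≤ x ∧ x ≤ G ∧ ¬ x ≤ c} := ⟨hy.1, hy.2.le.trans hx.2.1, hyc⟩
      have := hmin hymem hy.2.le
      exact hy.2.lt.not_ge this
    have hj : y1 ⊔ y2 = x := by
      have hle : y1 ⊔ y2 ≤ x := sup_le hy1.2.le hy2.2.le
      rcases eq_or_lt_of_le hle with heq | hlt
      · exact heq
      · -- y1 ≤ y1 ⊔ y2 < x, with y1 ⋖ x forces y1 ⊔ y2 = y1, so y2 ≤ y1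
        have h3 : y1 ⊔ y2 = y1 := by
          by_contra hne2
          exact hy1.2.2 (lt_of_le_of_ne le_sup_left (Ne.symm hne2)) hlt
        have hy21 : y2 ≤ y1 := le_sup_right.trans h3.le
        exfalso
        rcases eq_or_lt_of_le hy21 with heq2 | hlt2
        · exact hne heq2.symm
        · exact hy2.2.2 hlt2 hy1.2.lt
    have : x ≤ c := hj ▸ sup_le (hbelow y1 hy1) (hbelow y2 hy2)
    exact hx.2.2 this

include hcov hdiamond in
lemma aux_main (hrk0 : rk ⊥ = 0) :
    ∀ m : ℕ, ∀ G : L, rk G = m → ∀ j, j ≤ m →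
      Nat.choose m j ≤ {x | x ≤ G ∧ rk x = m - j}.ncard := by
  classical
  intro m
  induction m with
  | zero =>
    intro G hG j hj
    interval_cases j
    have hmem : G ∈ {x | x ≤ G ∧ rk x = 0 - 0} := ⟨le_refl G, by omega⟩
    have := Set.ncard_pos (s := {x | x ≤ G ∧ rk x = 0 - 0}) (Set.toFinite _) |>.mpr ⟨G, hmem⟩
    simpa [Nat.one_le_iff_ne_zero, Nat.pos_iff_ne_zero] using this
  | succ m ih =>
    intro G hG j hj
    rcases Nat.eq_zero_or_pos j with rfl | hj0
    · have hmem : G ∈ {x | x ≤ G ∧ rk x = m + 1 - 0} := ⟨le_refl G, by omega⟩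
      have := Set.ncard_pos (s := {x | x ≤ G ∧ rk x = m + 1 - 0}) (Set.toFinite _) |>.mpr ⟨G, hmem⟩
      simpa [Nat.one_le_iff_ne_zero, Nat.pos_iff_ne_zero] using this
    · obtain ⟨i, rfl⟩ : ∃ i, j = i + 1 := ⟨j - 1, by omega⟩
      have hG0 : (⊥ : L) < G := by
        rcases eq_or_lt_of_le (bot_le : (⊥ : L) ≤ G) with rfl | h
        · omega
        · exact h
      obtain ⟨c, _, hcG⟩ := aux_exists_le_covby (⊥ : L) G hG0
      have hrcG := hcov c G hcG
      have hrc : rk c = m := by omega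
      set S := {x : L | x ≤ G ∧ rk x = m + 1 - (i + 1)} with hS
      -- Part A: elements below c of rank m - i
      have hA := ih c hrc i (by omega)
      set A := {x : L | x ≤ c ∧ rk x = m - i} with hAdef
      have hAsub : A ⊆ S := by
        intro x hx
        have hx2 : rk x = m - i := hx.2
        exact ⟨hx.1.trans hcG.le, by omega⟩
      -- Part B (only when i + 1 ≤ m)
      by_cases him : i + 1 ≤ m
      · have hC := ih c hrc (i + 1) him
        set C := {z : L | z ≤ c ∧ rk z = m - (i + 1)} with hCdef
        have hspec : ∀ z ∈ C, ∃ x, z ⋖ x ∧ x ≤ G ∧ ¬ x ≤ c := fun z hz =>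
          aux_lemB rk hcov hdiamond z c G hz.1 hcG
        set f : L → L := fun z => if h : z ∈ C then (hspec z h).choose else z with hf
        have hfspec : ∀ z (h : z ∈ C), z ⋖ f z ∧ f z ≤ G ∧ ¬ f z ≤ c := by
          intro z h
          simp only [hf, dif_pos h]
          exact (hspec z h).choose_spec
        have hmaps : ∀ z ∈ C, f z ∈ S := by
          intro z h
          obtain ⟨h1, h2, _⟩ := hfspec z h
          have e1 : rk (f z) = rk z + 1 := hcov z (f z) h1
          have e2 : rk z = m - (i + 1) := h.2
          exact ⟨h2, by omega⟩
        have hinj : Set.InjOn f C := by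
          intro z1 h1 z2 h2 heq
          have e1 := hfspec z1 h1
          have e2 := hfspec z2 h2
          -- z = (f z) ⊓ c
          have key : ∀ z (h : z ∈ C), (f z) ⊓ c = z := by
            intro z h
            obtain ⟨hcov1, _, hnle⟩ := hfspec z h
            have hle1 : z ≤ f z ⊓ c := le_inf hcov1.le h.1
            rcases eq_or_lt_of_le hle1 with heq1 | hlt1
            · exact heq1.symm
            · exfalso
              rcases eq_or_lt_of_le (inf_le_left : f z ⊓ c ≤ f z) with heq2 | hlt2
              · exact hnle (heq2 ▸ inf_le_right)
              · exact hcov1.2 hlt1 hlt2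
          rw [← key z1 h1, heq, key z2 h2]
        have hcardB := Set.ncard_le_ncard_of_injOn f hmaps hinj (Set.toFinite _)
        -- images are disjoint from A
        have hdisj : Disjoint A (f '' C) := by
          rw [Set.disjoint_left]
          rintro x hxA ⟨z, hz, rfl⟩
          exact (hfspec z hz).2.2 hxA.1
        have hunion : A ∪ f '' C ⊆ S := by
          intro x hx
          rcases hx with hx | ⟨z, hz, rfl⟩
          · exact hAsub hx
          · exact hmaps z hz
        have h1 := Set.ncard_le_ncard hunion (Set.toFinite _)
        rw [Set.ncard_union_eq hdisj (Set.toFinite _) (Set.toFinite _)] at h1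
        have himg : C.ncard = (f '' C).ncard := (Set.ncard_image_of_injOn hinj).symm
        have hchoose : Nat.choose (m + 1) (i + 1) = Nat.choose m i + Nat.choose m (i + 1) :=
          Nat.choose_succ_succ m i
        omega
      · -- i + 1 = m + 1, i.e. i = m
        have him' : i = m := by omega
        have h1 := Set.ncard_le_ncard hAsub (Set.toFinite _)
        have h2 : Nat.choose (m + 1) (i + 1) = 1 := by rw [him']; exact Nat.choose_self _
        have h3 : Nat.choose m i = 1 := by rw [him']; exact Nat.choose_self _
        omega

end XueAux

/-- Dual form of Xue's lemma: in a diamond lattice of rank `d+2`, for an element `G`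
of corank `r` (rank `d+2-r`) and `k` with `r ≤ k+1 ≤ d+1`, the lower interval `[⊥, G]`
contains at least `C(d-r+2, k+1-r)` elements of corank `k+1` (rank `d+2-(k+1)`). -/
theorem stmt_2 {L : Type*} [Lattice L] [BoundedOrder L] [Fintype L]
    (d : ℕ) (rk : L → ℕ) (hrk0 : rk ⊥ = 0)
    (hcov : ∀ a b : L, a ⋖ b → rk b = rk a + 1)
    (hrtop : rk ⊤ = d + 2)
    (hdiamond : ∀ a b : L, a ≤ b → rk b = rk a + 2 → (Set.Icc a b).ncard = 4)
    (G : L) (r : ℕ) (hr : r ≤ d + 2) (hG : rk G = d + 2 - r)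
    (k : ℕ) (hk1 : r ≤ k + 1) (hk2 : k + 1 ≤ d + 1) :
    Nat.choose (d - r + 2) (k + 1 - r) ≤
      {x : L | x ≤ G ∧ rk x = d + 2 - (k + 1)}.ncard := by
  have hmain := aux_main rk hcov hdiamond hrk0 (d + 2 - r) G hG (k + 1 - r) (by omega)
  have hset : {x : L | x ≤ G ∧ rk x = d + 2 - r - (k + 1 - r)} =
      {x : L | x ≤ G ∧ rk x = d + 2 - (k + 1)} := by
    have : d + 2 - r - (k + 1 - r) = d + 2 - (k + 1) := by omega
    rw [this]
  rw [hset] at hmain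
  refine le_trans ?_ hmain
  rcases le_or_gt r d with hrd | hrd
  · have : d - r + 2 = d + 2 - r := by omega
    rw [this]
  · have hr' : r = d + 1 := by omega
    have hk' : k + 1 - r = 0 := by omega
    rw [hk']
    simp
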